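/- Let 0 < η < 1 and L > 0, and let u = (u_z, u_r, u_θ) : ℝ × [η,1] → ℝ³ be a C¹ vector field, L-periodic in z, satisfying ∂_z(r u_z) + ∂_r(r u_r) = 0 on ℝ × (η,1) and u_r(z, η) = u_r(z, 1) = 0 for all z. Then the weighted mean of the axial convective term vanishes: ∫₀^L ∫_η^1 r·(u_r ∂_r u_z + u_z ∂_z u_z) dr dz = 0. -/

import Mathlib

open MeasureTheory

/-- Partial derivative in the axial variable `z` of a function of `(z, r)`. -/
noncomputable def pdz (f : ℝ → ℝ → ℝ) (z r : ℝ) : ℝ := deriv (fun z' => f z' r) z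

/-- Partial derivative in the radial variable `r` of a function of `(z, r)`. -/
noncomputable def pdr (f : ℝ → ℝ → ℝ) (z r : ℝ) : ℝ := deriv (fun r' => f z r') r

/-- For a `C¹` field `u`, `L`-periodic in `z`, divergence-free in the
weighted sense and with `u_r` vanishing at the walls, the weighted mean of the axial
convective term vanishes:
`∫₀^L ∫_η^1 r (u_r ∂_r u_z + u_z ∂_z u_z) dr dz = 0`. -/
theorem axial_convective_term_mean_zero
    (η L : ℝ) (hη : 0 < η) (hη1 : η < 1) (hL : 0 < L)
    (uz ur uθ : ℝ → ℝ → ℝ)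
    (hu : ContDiffOn ℝ 1 (fun q : ℝ × ℝ => (uz q.1 q.2, ur q.1 q.2, uθ q.1 q.2))
      (Set.univ ×ˢ Set.Icc η 1))
    (hper : ∀ z r : ℝ, uz (z + L) r = uz z r ∧ ur (z + L) r = ur z r ∧
      uθ (z + L) r = uθ z r)
    (hdiv : ∀ z r : ℝ, η < r → r < 1 →
      pdz (fun z' r' => r' * uz z' r') z r + pdr (fun z' r' => r' * ur z' r') z r = 0)
    (hbc : ∀ z : ℝ, ur z η = 0 ∧ ur z 1 = 0) :
    ∫ z in (0:ℝ)..L, ∫ r in η..1,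
      r * (ur z r * pdr uz z r + uz z r * pdz uz z r) = 0 := by
  have hη1' : η ≤ 1 := le_of_lt hη1
  set s : Set (ℝ × ℝ) := Set.univ ×ˢ Set.Icc η 1 with hsdef
  have hsu : UniqueDiffOn ℝ s := uniqueDiffOn_univ.prod (uniqueDiffOn_Icc hη1)
  have huzc : ContDiffOn ℝ 1 (fun q : ℝ × ℝ => uz q.1 q.2) s :=
    contDiff_fst.comp_contDiffOn hu
  have hurc : ContDiffOn ℝ 1 (fun q : ℝ × ℝ => ur q.1 q.2) s :=
    contDiff_fst.comp_contDiffOn (contDiff_snd.comp_contDiffOn hu)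
  set Dz := fderivWithin ℝ (fun q : ℝ × ℝ => uz q.1 q.2) s with hDzdef
  set Dr := fderivWithin ℝ (fun q : ℝ × ℝ => ur q.1 q.2) s with hDrdef
  have hDzc : ContinuousOn Dz s := huzc.continuousOn_fderivWithin hsu le_rfl
  have hDrc : ContinuousOn Dr s := hurc.continuousOn_fderivWithin hsu le_rfl
  have hDz : ∀ q ∈ s, HasFDerivWithinAt (fun q : ℝ × ℝ => uz q.1 q.2) (Dz q) s q :=
    fun q hq => (huzc.differentiableOn one_ne_zero q hq).hasFDerivWithinAt
  have hDr : ∀ q ∈ s, HasFDerivWithinAt (fun q : ℝ × ℝ => ur q.1 q.2) (Dr q) s q :=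
    fun q hq => (hurc.differentiableOn one_ne_zero q hq).hasFDerivWithinAt
  have mems : ∀ z r : ℝ, r ∈ Set.Icc η 1 → ((z, r) : ℝ × ℝ) ∈ s :=
    fun z r hr => ⟨Set.mem_univ z, hr⟩
  -- derivative in the z direction, valid for every r ∈ [η,1]
  have keyz : ∀ (g : ℝ → ℝ → ℝ) (D : ℝ × ℝ → (ℝ × ℝ) →L[ℝ] ℝ),
      (∀ q ∈ s, HasFDerivWithinAt (fun q : ℝ × ℝ => g q.1 q.2) (D q) s q) →
      ∀ z r : ℝ, r ∈ Set.Icc η 1 →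
        HasDerivAt (fun z' => g z' r) (D (z, r) (1, 0)) z := by
    intro g D hD z r hr
    have hγ : HasDerivWithinAt (fun z' : ℝ => ((z' : ℝ), r)) ((1 : ℝ), (0 : ℝ))
        Set.univ z :=
      (HasDerivAt.prodMk (hasDerivAt_id z) (hasDerivAt_const z r)).hasDerivWithinAt
    have := (hD (z, r) (mems z r hr)).comp_hasDerivWithinAt z hγ
      (fun z' _ => mems z' r hr)
    rw [hasDerivWithinAt_univ] at this
    exact this
  -- derivative in the r direction, valid for r in the interior
  have keyr : ∀ (g : ℝ → ℝ → ℝ) (D : ℝ × ℝ → (ℝ × ℝ) →L[ℝ] ℝ),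
      (∀ q ∈ s, HasFDerivWithinAt (fun q : ℝ × ℝ => g q.1 q.2) (D q) s q) →
      ∀ z r : ℝ, r ∈ Set.Ioo η 1 →
        HasDerivAt (fun r' => g z r') (D (z, r) (0, 1)) r := by
    intro g D hD z r hr
    have hγ : HasDerivWithinAt (fun r' : ℝ => ((z : ℝ), r')) ((0 : ℝ), (1 : ℝ))
        (Set.Icc η 1) r :=
      (HasDerivAt.prodMk (hasDerivAt_const r z) (hasDerivAt_id r)).hasDerivWithinAt
    have h1 : HasDerivWithinAt (fun r' => g z r') (D (z, r) (0, 1)) (Set.Icc η 1) r :=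
      (hD (z, r) (mems z r (Set.mem_Icc_of_Ioo hr))).comp_hasDerivWithinAt r hγ
        (fun r' hr' => mems z r' hr')
    exact h1.hasDerivAt (Icc_mem_nhds hr.1 hr.2)
  -- continuity of the directional derivatives on s
  have hPzc : ContinuousOn (fun q : ℝ × ℝ => Dz q (1, 0)) s :=
    (ContinuousLinearMap.apply ℝ ℝ ((1 : ℝ), (0 : ℝ))).continuous.comp_continuousOn hDzc
  have hQzc : ContinuousOn (fun q : ℝ × ℝ => Dz q (0, 1)) s :=
    (ContinuousLinearMap.apply ℝ ℝ ((0 : ℝ), (1 : ℝ))).continuous.comp_continuousOn hDzc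
  have hQrc : ContinuousOn (fun q : ℝ × ℝ => Dr q (0, 1)) s :=
    (ContinuousLinearMap.apply ℝ ℝ ((0 : ℝ), (1 : ℝ))).continuous.comp_continuousOn hDrc
  -- slices in r
  have slice : ∀ (F : ℝ × ℝ → ℝ), ContinuousOn F s → ∀ z : ℝ,
      ContinuousOn (fun r => F (z, r)) (Set.Icc η 1) := by
    intro F hF z
    exact hF.comp ((continuous_const.prodMk continuous_id).continuousOn)
      (fun r hr => mems z r hr)
  -- slices in z
  have zslice : ∀ (F : ℝ × ℝ → ℝ), ContinuousOn F s → ∀ r : ℝ, r ∈ Set.Icc η 1 →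
      ContinuousOn (fun z => F (z, r)) (Set.Icc (0 : ℝ) L) := by
    intro F hF r hr
    exact hF.comp ((continuous_id.prodMk continuous_const).continuousOn)
      (fun z _ => mems z r hr)
  -- the continuous "ψ" integrand
  set Ψ : ℝ × ℝ → ℝ := fun q => 2 * q.2 * uz q.1 q.2 * Dz q (1, 0) with hΨdef
  have hΨc : ContinuousOn Ψ s :=
    (((continuous_const.mul continuous_snd).continuousOn.mul huzc.continuousOn).mul hPzc)
  -- Step 1: the inner integral equals the inner integral of Ψ
  have inner : ∀ z : ℝ,
      (∫ r in η..1, r * (ur z r * pdr uz z r + uz z r * pdz uz z r))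
        = ∫ r in η..1, Ψ (z, r) := by
    intro z
    -- the "A" part, an exact derivative in r
    set A : ℝ → ℝ := fun r =>
      ur z r * uz z r + r * Dr (z, r) (0, 1) * uz z r + r * ur z r * Dz (z, r) (0, 1)
      with hAdef
    have hAcont : ContinuousOn A (Set.Icc η 1) := by
      apply ContinuousOn.add
      apply ContinuousOn.add
      · exact (slice _ hurc.continuousOn z).mul (slice _ huzc.continuousOn z)
      · exact (continuous_id.continuousOn.mul (slice _ hQrc z)).mul
          (slice _ huzc.continuousOn z)
      · exact (continuous_id.continuousOn.mul (slice _ hurc.continuousOn z)).mul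
          (slice _ hQzc z)
    have hAint : IntervalIntegrable A volume η 1 :=
      ContinuousOn.intervalIntegrable (by rw [Set.uIcc_of_le hη1']; exact hAcont)
    have hψcont : ContinuousOn (fun r => Ψ (z, r)) (Set.Icc η 1) := slice _ hΨc z
    have hψint : IntervalIntegrable (fun r => Ψ (z, r)) volume η 1 :=
      ContinuousOn.intervalIntegrable (by rw [Set.uIcc_of_le hη1']; exact hψcont)
    -- pointwise identity on the interior
    have hpt : ∀ r ∈ Set.Ioo η 1,
        r * (ur z r * pdr uz z r + uz z r * pdz uz z r) = A r + Ψ (z, r) := by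
      intro r hr
      have hduz_r : HasDerivAt (fun r' => uz z r') (Dz (z, r) (0, 1)) r :=
        keyr uz Dz hDz z r hr
      have hdur_r : HasDerivAt (fun r' => ur z r') (Dr (z, r) (0, 1)) r :=
        keyr ur Dr hDr z r hr
      have hduz_z : HasDerivAt (fun z' => uz z' r) (Dz (z, r) (1, 0)) z :=
        keyz uz Dz hDz z r (Set.mem_Icc_of_Ioo hr)
      have e1 : pdr uz z r = Dz (z, r) (0, 1) := hduz_r.deriv
      have e2 : pdz uz z r = Dz (z, r) (1, 0) := hduz_z.deriv
      have e3 : pdz (fun z' r' => r' * uz z' r') z r = r * Dz (z, r) (1, 0) :=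
        (hduz_z.const_mul r).deriv
      have e4 : pdr (fun z' r' => r' * ur z' r') z r = 1 * ur z r + r * Dr (z, r) (0, 1) :=
        ((hasDerivAt_id r).mul hdur_r).deriv
      have hd := hdiv z r hr.1 hr.2
      rw [e3, e4] at hd
      rw [e1, e2, hAdef, hΨdef]
      simp only
      linear_combination (-(uz z r)) * hd
    -- a.e. congruence on the interval
    have hcongr : (∫ r in η..1, r * (ur z r * pdr uz z r + uz z r * pdz uz z r))
        = ∫ r in η..1, (A r + Ψ (z, r)) := by
      apply intervalIntegral.integral_congr_ae
      have h1 : (volume : Measure ℝ) {(1 : ℝ)} = 0 := measure_singleton 1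
      filter_upwards [compl_mem_ae_iff.2 h1] with r hr1 hr
      rw [Set.uIoc_of_le hη1'] at hr
      exact hpt r ⟨hr.1, lt_of_le_of_ne hr.2 (by simpa using hr1)⟩
    -- the A part integrates to zero
    have hA0 : (∫ r in η..1, A r) = 0 := by
      have hcont : ContinuousOn (fun r => r * ur z r * uz z r) (Set.Icc η 1) :=
        (continuous_id.continuousOn.mul (slice _ hurc.continuousOn z)).mul
          (slice _ huzc.continuousOn z)
      have hderiv : ∀ r ∈ Set.Ioo η 1,
          HasDerivWithinAt (fun r' => r' * ur z r' * uz z r') (A r) (Set.Ioi r) r := by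
        intro r hr
        have h := ((hasDerivAt_id r).mul (keyr ur Dr hDr z r hr)).mul
          (keyr uz Dz hDz z r hr)
        have hEq : A r = (1 * ur z r + r * Dr (z, r) (0, 1)) * uz z r
            + r * ur z r * Dz (z, r) (0, 1) := by rw [hAdef]; ring
        rw [hEq]
        exact h.hasDerivWithinAt
      have := intervalIntegral.integral_eq_sub_of_hasDeriv_right_of_le hη1' hcont
        hderiv hAint
      rw [this, (hbc z).1, (hbc z).2]
      ring
    rw [hcongr, intervalIntegral.integral_add hAint hψint, hA0, zero_add]
  -- Step 2: for each r, the z-integral of Ψ vanishes (periodicity)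
  have houter : ∀ r : ℝ, r ∈ Set.Icc η 1 → (∫ z in (0:ℝ)..L, Ψ (z, r)) = 0 := by
    intro r hr
    have hd : ∀ z ∈ Set.uIcc (0 : ℝ) L,
        HasDerivAt (fun z' => r * uz z' r ^ 2) (Ψ (z, r)) z := by
      intro z _
      have h := ((keyz uz Dz hDz z r hr).pow 2).const_mul r
      have hEq : Ψ (z, r) = r * (2 * uz z r ^ (2 - 1) * Dz (z, r) (1, 0)) := by
        rw [hΨdef]; norm_num; ring
      rw [hEq]
      exact h
    have hint : IntervalIntegrable (fun z => Ψ (z, r)) volume 0 L :=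
      ContinuousOn.intervalIntegrable
        (by rw [Set.uIcc_of_le hL.le]; exact zslice _ hΨc r hr)
    have := intervalIntegral.integral_eq_sub_of_hasDerivAt hd hint
    rw [this]
    have hp : uz L r = uz 0 r := by
      have := (hper 0 r).1
      rwa [zero_add] at this
    rw [hp]
    ring
  -- Step 3: Fubini for Ψ on the rectangle
  have hsub : Set.Icc (0 : ℝ) L ×ˢ Set.Icc η 1 ⊆ s :=
    Set.prod_mono (Set.subset_univ _) subset_rfl
  have hInt : IntegrableOn Ψ (Set.Icc (0 : ℝ) L ×ˢ Set.Icc η 1) volume :=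
    (hΨc.mono hsub).integrableOn_compact (isCompact_Icc.prod isCompact_Icc)
  have hInt2 : Integrable (Function.uncurry fun z r => Ψ (z, r))
      ((volume.restrict (Set.Ioc (0 : ℝ) L)).prod (volume.restrict (Set.Ioc η 1))) := by
    rw [Measure.prod_restrict]
    have : IntegrableOn Ψ (Set.Ioc (0 : ℝ) L ×ˢ Set.Ioc η 1) volume :=
      hInt.mono_set (Set.prod_mono Set.Ioc_subset_Icc_self Set.Ioc_subset_Icc_self)
    rw [Measure.volume_eq_prod] at this
    exact this
  have hswap : (∫ z in (0:ℝ)..L, ∫ r in η..1, Ψ (z, r))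
      = ∫ r in η..1, ∫ z in (0:ℝ)..L, Ψ (z, r) := by
    simp only [intervalIntegral.integral_of_le hη1', intervalIntegral.integral_of_le hL.le]
    exact MeasureTheory.integral_integral_swap hInt2
  calc
    (∫ z in (0:ℝ)..L, ∫ r in η..1, r * (ur z r * pdr uz z r + uz z r * pdz uz z r))
        = ∫ z in (0:ℝ)..L, ∫ r in η..1, Ψ (z, r) :=
      intervalIntegral.integral_congr (fun z _ => inner z)
    _ = ∫ r in η..1, ∫ z in (0:ℝ)..L, Ψ (z, r) := hswap
    _ = ∫ r in η..1, (0 : ℝ) := by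
      apply intervalIntegral.integral_congr
      intro r hr
      rw [Set.uIcc_of_le hη1'] at hr
      exact houter r hr
    _ = 0 := by simp
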